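/- Let K ≥ 1 be an integer and j an integer with 0 ≤ j ≤ K, let a ∈ [0,1) and b > 0 be real numbers with ⌈a⌉ < ⌊a + 2bK⌋, set q := ⌊a + 2bK⌋ and ω := a + 2bK − q, and let M be an integer with M > q. Then | ∑_{m=q+1}^{M} I_{C₃}(K,j;a−m,b) − e^{−(j+1)πi/2} · J(K,j; M−q, 2bK−ω, b) | ≤ e^{−K}. -/

import Mathlib

open scoped BigOperators

/-- `I_{C₃}(K,j;c,b) = (−i)^{j+1} K^{-j} ∫_0^∞ t^j exp(2πct − 2πib t²) dt`
(the contour integral along the downward ray `{−it : t ≥ 0}`, convergent for `c < 0`). -/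
noncomputable def IC3 (K j : ℕ) (c b : ℝ) : ℂ :=
  (-Complex.I) ^ (j + 1) * ((K : ℂ) ^ j)⁻¹ *
    ∫ t in Set.Ioi (0 : ℝ), (t : ℂ) ^ j *
      Complex.exp (2 * (Real.pi : ℂ) * (c : ℂ) * (t : ℂ) -
        2 * (Real.pi : ℂ) * Complex.I * (b : ℂ) * (t : ℂ) ^ 2)

/-- `J(K,l;M,w,b) = K^{-l} ∫_0^K t^l e^{-2πwt-2πibt²} (1 - e^{-2πMt})/(e^{2πt}-1) dt`. -/
noncomputable def Jint (K l : ℕ) (M : ℤ) (w b : ℝ) : ℂ :=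
  ((K : ℂ) ^ l)⁻¹ * ∫ t in (0 : ℝ)..(K : ℝ), (t : ℂ) ^ l *
    Complex.exp (-2 * (Real.pi : ℂ) * (w : ℂ) * (t : ℂ) -
      2 * (Real.pi : ℂ) * Complex.I * (b : ℂ) * (t : ℂ) ^ 2) *
    ((1 - Complex.exp (-2 * (Real.pi : ℂ) * (M : ℂ) * (t : ℂ))) /
      (Complex.exp (2 * (Real.pi : ℂ) * (t : ℂ)) - 1))

open MeasureTheory Set Filter Real Topology

namespace SumIC3Aux


/-- The integrand of `IC3`. -/
noncomputable def f1 (j : ℕ) (c b : ℝ) (t : ℝ) : ℂ :=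
  (t : ℂ) ^ j * Complex.exp (2 * (Real.pi : ℂ) * (c : ℂ) * (t : ℂ) -
    2 * (Real.pi : ℂ) * Complex.I * (b : ℂ) * (t : ℂ) ^ 2)

/-- The integrand of `Jint`. -/
noncomputable def g1 (l : ℕ) (w b : ℝ) (M : ℤ) (t : ℝ) : ℂ :=
  (t : ℂ) ^ l * Complex.exp (-2 * (Real.pi : ℂ) * (w : ℂ) * (t : ℂ) -
      2 * (Real.pi : ℂ) * Complex.I * (b : ℂ) * (t : ℂ) ^ 2) *
    ((1 - Complex.exp (-2 * (Real.pi : ℂ) * (M : ℂ) * (t : ℂ))) /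
      (Complex.exp (2 * (Real.pi : ℂ) * (t : ℂ)) - 1))

lemma IC3_eq (K j : ℕ) (c b : ℝ) :
    IC3 K j c b = (-Complex.I) ^ (j + 1) * ((K : ℂ) ^ j)⁻¹ *
      ∫ t in Set.Ioi (0:ℝ), f1 j c b t := rfl

lemma Jint_eq (K l : ℕ) (M : ℤ) (w b : ℝ) :
    Jint K l M w b = ((K : ℂ) ^ l)⁻¹ * ∫ t in Ioc (0:ℝ) (K:ℝ), g1 l w b M t := by
  rw [Jint, intervalIntegral.integral_of_le (by positivity : (0:ℝ) ≤ (K:ℝ))]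
  rfl

lemma norm_cexp_add_mul_I (x y : ℝ) : ‖Complex.exp ((x:ℂ) + (y:ℂ) * Complex.I)‖ = Real.exp x := by
  rw [Complex.norm_exp]
  simp

lemma integrableOn_pow_mul_exp (j : ℕ) {c : ℝ} (hc : c < 0) :
    IntegrableOn (fun t : ℝ => t ^ j * Real.exp (2 * π * c * t)) (Ioi 0) := by
  have hb : (0:ℝ) < -(2 * π * c) := by nlinarith [Real.pi_pos]
  have h := integrableOn_rpow_mul_exp_neg_mul_rpow (s := (j:ℝ)) (p := 1)
    (by exact_mod_cast neg_one_lt_zero.trans_le (Nat.cast_nonneg j) : (-1:ℝ) < (j:ℝ)) zero_lt_one hb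
  refine h.congr_fun (fun t _ => ?_) measurableSet_Ioi
  simp only [Real.rpow_natCast, Real.rpow_one, neg_neg]

lemma integrableOn_f1 (j : ℕ) {c : ℝ} (hc : c < 0) (b : ℝ) :
    IntegrableOn (f1 j c b) (Ioi 0) := by
  refine (integrableOn_pow_mul_exp j hc).mono' ?_ ?_
  · exact (Continuous.aestronglyMeasurable (by unfold f1; fun_prop))
  · filter_upwards [ae_restrict_mem measurableSet_Ioi] with t ht
    have h : (2 * (π : ℂ) * (c : ℂ) * (t : ℂ) - 2 * (π : ℂ) * Complex.I * (b : ℂ) * (t : ℂ) ^ 2)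
        = ((2 * π * c * t : ℝ) : ℂ) + ((-(2 * π * b * t^2) : ℝ) : ℂ) * Complex.I := by
      push_cast; ring
    rw [f1, norm_mul, h, norm_cexp_add_mul_I, norm_pow, Complex.norm_real, Real.norm_eq_abs,
      abs_of_pos ht]

lemma integral_exp_neg_mul_Ioi {r : ℝ} (hr : 0 < r) (c : ℝ) :
    ∫ t in Ioi c, Real.exp (-r * t) = Real.exp (-r * c) / r := by
  have hd : ∀ x ∈ Ioi c, HasDerivAt (fun t : ℝ => -Real.exp (-r * t) / r)
      (Real.exp (-r * x)) x := by
    intro x _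
    have h : HasDerivAt (fun t : ℝ => -r * t) (-r) x := by
      simpa using (hasDerivAt_id x).const_mul (-r)
    have h2 := (h.exp).neg.div_const r
    refine h2.congr_deriv ?_
    rw [mul_neg, neg_neg, mul_div_assoc, div_self hr.ne', mul_one]
  have hten : Tendsto (fun t : ℝ => -Real.exp (-r * t) / r) atTop (𝓝 0) := by
    have h : Tendsto (fun t : ℝ => Real.exp (-r * t)) atTop (𝓝 0) :=
      Real.tendsto_exp_atBot.comp (tendsto_id.const_mul_atTop_of_neg (neg_neg_iff_pos.2 hr))
    simpa using (h.neg.div_const r)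
  have := integral_Ioi_of_hasDerivAt_of_tendsto
    (f := fun t : ℝ => -Real.exp (-r * t) / r) (f' := fun t : ℝ => Real.exp (-r * t))
    (a := c) (m := 0)
    ((Continuous.continuousWithinAt (by fun_prop))) hd (exp_neg_integrableOn_Ioi c hr) hten
  rw [this]; ring

lemma sum_exp_eq (q M : ℤ) (hqM : q < M) (a : ℝ) {t : ℝ} (ht : 0 < t) :
    ∑ m ∈ Finset.Icc (q + 1) M, Complex.exp (2 * (π:ℂ) * ((a - (m:ℝ) : ℝ):ℂ) * (t:ℂ)) =
    Complex.exp (-2 * (π:ℂ) * (((q:ℝ) - a : ℝ):ℂ) * (t:ℂ)) *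
      ((1 - Complex.exp (-2 * (π:ℂ) * ((M - q : ℤ):ℂ) * (t:ℂ))) /
        (Complex.exp (2 * (π:ℂ) * (t:ℂ)) - 1)) := by
  set r := Complex.exp (-2 * (π:ℂ) * (t:ℂ)) with hr
  have hrnorm : ‖r‖ = Real.exp (-(2 * π * t)) := by
    have h : (-2 * (π:ℂ) * (t:ℂ)) = ((-(2 * π * t) : ℝ) : ℂ) := by push_cast; ring
    rw [hr, h, Complex.norm_exp_ofReal]
  have hr1 : r ≠ 1 := by
    intro h
    rw [h, norm_one] at hrnorm
    have hlt : Real.exp (-(2 * π * t)) < Real.exp 0 :=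
      Real.exp_lt_exp.mpr (by nlinarith [Real.pi_pos])
    rw [Real.exp_zero, ← hrnorm] at hlt
    exact lt_irrefl _ hlt
  have hr0 : r ≠ 0 := Complex.exp_ne_zero _
  set N := (M - q).toNat with hN
  have hNc : ((N : ℕ) : ℂ) = ((M - q : ℤ) : ℂ) := by
    have : ((N : ℕ) : ℤ) = M - q := Int.toNat_of_nonneg (by omega)
    exact_mod_cast this
  have hinj : Function.Injective (fun k : ℕ => q + 1 + (k:ℤ)) := by intro x y h; simpa using h
  have hIcc : Finset.Icc (q + 1) M =
      Finset.map ⟨fun k : ℕ => q + 1 + k, hinj⟩ (Finset.range N) := by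
    ext m
    simp only [Finset.mem_Icc, Finset.mem_map, Finset.mem_range, Function.Embedding.coeFn_mk]
    constructor
    · rintro ⟨h1, h2⟩; exact ⟨(m - (q + 1)).toNat, by omega, by omega⟩
    · rintro ⟨k, hk, rfl⟩; omega
  rw [hIcc, Finset.sum_map]
  simp only [Function.Embedding.coeFn_mk]
  have hterm : ∀ k : ℕ, Complex.exp (2 * (π:ℂ) * ((a - ((q + 1 + (k:ℤ) : ℤ):ℝ) : ℝ):ℂ) * (t:ℂ))
      = Complex.exp (2 * (π:ℂ) * ((a:ℂ) - (q:ℂ) - 1) * (t:ℂ)) * r ^ k := by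
    intro k
    rw [hr, ← Complex.exp_nat_mul, ← Complex.exp_add]
    congr 1
    push_cast
    ring
  simp only [hterm]
  rw [← Finset.mul_sum, geom_sum_eq hr1]
  have hexp2 : Complex.exp (2 * (π:ℂ) * (t:ℂ)) = r⁻¹ := by
    rw [hr, ← Complex.exp_neg]
    congr 1; ring
  have hq1 : Complex.exp (2 * (π:ℂ) * ((a:ℂ) - (q:ℂ) - 1) * (t:ℂ))
      = Complex.exp (-2 * (π:ℂ) * (((q:ℝ) - a : ℝ):ℂ) * (t:ℂ)) * r := by
    rw [hr, ← Complex.exp_add]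
    congr 1
    push_cast
    ring
  have hrN : Complex.exp (-2 * (π:ℂ) * ((M - q : ℤ):ℂ) * (t:ℂ)) = r ^ N := by
    rw [← hNc, hr, ← Complex.exp_nat_mul]
    congr 1; ring
  rw [hq1, hexp2, hrN]
  have h1 : r - 1 ≠ 0 := sub_ne_zero.mpr hr1
  have h2 : r⁻¹ - 1 ≠ 0 := sub_ne_zero.mpr (fun h => hr1 (by rwa [inv_eq_one] at h))
  have h1' : (1:ℂ) - r ≠ 0 := sub_ne_zero.mpr (Ne.symm hr1)
  field_simp
  ring

/-- Pointwise identity: sum of the `f1` integrands equals the `g1` integrand. -/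
lemma sum_f1_eq_g1 (j : ℕ) (q M : ℤ) (hqM : q < M) (a b : ℝ) {t : ℝ} (ht : 0 < t) :
    ∑ m ∈ Finset.Icc (q + 1) M, f1 j (a - (m:ℝ)) b t = g1 j ((q:ℝ) - a) b (M - q) t := by
  have hsplit : ∀ A : ℂ, Complex.exp (A - 2 * (π:ℂ) * Complex.I * (b:ℂ) * (t:ℂ)^2)
      = Complex.exp A * Complex.exp (-(2 * (π:ℂ) * Complex.I * (b:ℂ) * (t:ℂ)^2)) := by
    intro A; rw [← Complex.exp_add]; ring_nf
  calc ∑ m ∈ Finset.Icc (q + 1) M, f1 j (a - (m:ℝ)) b t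
      = (t:ℂ)^j * Complex.exp (-(2 * (π:ℂ) * Complex.I * (b:ℂ) * (t:ℂ)^2)) *
        ∑ m ∈ Finset.Icc (q + 1) M, Complex.exp (2 * (π:ℂ) * ((a - (m:ℝ) : ℝ):ℂ) * (t:ℂ)) := by
        rw [Finset.mul_sum]
        refine Finset.sum_congr rfl (fun m _ => ?_)
        rw [f1, hsplit]
        ring
    _ = g1 j ((q:ℝ) - a) b (M - q) t := by
        rw [sum_exp_eq q M hqM a ht, g1, hsplit]
        ring

/-- Norm of the `g1` integrand for `t > 0`. -/
lemma norm_g1 (j : ℕ) (w b : ℝ) (M : ℤ) {t : ℝ} (ht : 0 < t) :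
    ‖g1 j w b M t‖ = t^j * Real.exp (-(2*π*w*t)) *
      (|1 - Real.exp (-(2*π*(M:ℝ)*t))| / (Real.exp (2*π*t) - 1)) := by
  have e1 : Complex.exp (-2 * (π:ℂ) * (w:ℂ) * (t:ℂ) - 2 * (π:ℂ) * Complex.I * (b:ℂ) * (t:ℂ)^2)
      = Complex.exp (((-(2*π*w*t) : ℝ) : ℂ) + ((-(2*π*b*t^2) : ℝ) : ℂ) * Complex.I) := by
    congr 1; push_cast; ring
  have e2 : Complex.exp (-2 * (π:ℂ) * ((M:ℤ):ℂ) * (t:ℂ))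
      = ((Real.exp (-(2*π*(M:ℝ)*t)) : ℝ) : ℂ) := by
    rw [Complex.ofReal_exp]; congr 1; push_cast; ring
  have e3 : Complex.exp (2 * (π:ℂ) * (t:ℂ)) = ((Real.exp (2*π*t) : ℝ) : ℂ) := by
    rw [Complex.ofReal_exp]; congr 1; push_cast; ring
  have hden : (0:ℝ) < Real.exp (2*π*t) - 1 := by
    have : Real.exp 0 < Real.exp (2*π*t) := Real.exp_lt_exp.mpr (by positivity)
    rw [Real.exp_zero] at this; linarith
  rw [g1, norm_mul, norm_mul, norm_div, e1, e2, e3, norm_cexp_add_mul_I, norm_pow,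
    Complex.norm_real, Real.norm_eq_abs, abs_of_pos ht]
  have h4 : ((1:ℂ) - ((Real.exp (-(2*π*(M:ℝ)*t)) : ℝ) : ℂ))
      = (((1 - Real.exp (-(2*π*(M:ℝ)*t)) : ℝ)) : ℂ) := by push_cast; ring
  have h5 : (((Real.exp (2*π*t) : ℝ)) : ℂ) - 1 = (((Real.exp (2*π*t) - 1 : ℝ)) : ℂ) := by
    push_cast; ring
  rw [h4, h5, Complex.norm_real, Complex.norm_real, Real.norm_eq_abs, Real.norm_eq_abs,
    abs_of_pos hden]



lemma norm_g1_le_aux {j K0 : ℕ} (hK : 1 ≤ K0) (hj : j ≤ K0) {w : ℝ} (hw : 0 < w)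
    {Mr : ℝ} (hMr : 1 ≤ Mr) {t : ℝ} (htK : (K0:ℝ) < t) :
    t^j * Real.exp (-(2*π*w*t)) * (|1 - Real.exp (-(2*π*Mr*t))| / (Real.exp (2*π*t) - 1))
      ≤ (K0:ℝ)^j * (Real.exp (-(K0:ℝ)) / (1 - Real.exp (-(2*π)))) *
        Real.exp (-(2*π - 1)*t) := by
  have hK0 : (1:ℝ) ≤ (K0:ℝ) := by exact_mod_cast hK
  have hK0' : (0:ℝ) < (K0:ℝ) := by linarith
  have ht1 : (1:ℝ) < t := lt_of_le_of_lt hK0 htK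
  have ht0 : (0:ℝ) < t := by linarith
  have hpi := Real.pi_gt_three
  -- t^j ≤ K0^j * exp (t - K0)
  have hb1 : t^j ≤ (K0:ℝ)^j * Real.exp (t - (K0:ℝ)) := by
    have hdiv : 1 ≤ t / (K0:ℝ) := (one_le_div hK0').mpr htK.le
    have e1 : t/(K0:ℝ) ≤ Real.exp (t/(K0:ℝ) - 1) := by
      linarith [Real.add_one_le_exp (t/(K0:ℝ) - 1)]
    calc t^j = (K0:ℝ)^j * (t/(K0:ℝ))^j := by
          rw [div_pow]; field_simp
      _ ≤ (K0:ℝ)^j * (Real.exp (t/(K0:ℝ) - 1))^j := by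
          exact mul_le_mul_of_nonneg_left (pow_le_pow_left₀ (by positivity) e1 j) (by positivity)
      _ = (K0:ℝ)^j * Real.exp ((t/(K0:ℝ) - 1) * j) := by
          rw [← Real.exp_nat_mul]; ring_nf
      _ ≤ (K0:ℝ)^j * Real.exp (t - (K0:ℝ)) := by
          refine mul_le_mul_of_nonneg_left (Real.exp_le_exp.mpr ?_) (by positivity)
          have hjK : (j:ℝ) ≤ (K0:ℝ) := by exact_mod_cast hj
          have h0 : 0 ≤ t/(K0:ℝ) - 1 := by linarith
          have := mul_le_mul_of_nonneg_left hjK h0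
          have heq : (t/(K0:ℝ) - 1) * (K0:ℝ) = t - (K0:ℝ) := by field_simp
          linarith [heq ▸ this]
  have hb2 : Real.exp (-(2*π*w*t)) ≤ 1 := by
    rw [← Real.exp_zero]
    have := mul_pos (mul_pos (mul_pos two_pos Real.pi_pos) hw) ht0
    exact Real.exp_le_exp.mpr (by linarith)
  have hb3 : |1 - Real.exp (-(2*π*Mr*t))| ≤ 1 := by
    have hp := Real.exp_pos (-(2*π*Mr*t))
    have hle : Real.exp (-(2*π*Mr*t)) ≤ 1 := by
      rw [← Real.exp_zero]
      have := mul_pos (mul_pos (mul_pos two_pos Real.pi_pos) (by linarith : (0:ℝ) < Mr)) ht0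
      exact Real.exp_le_exp.mpr (by linarith)
    rw [abs_of_nonneg (by linarith)]
    linarith
  have hden : (0:ℝ) < Real.exp (2*π*t) - 1 := by
    have : Real.exp 0 < Real.exp (2*π*t) := Real.exp_lt_exp.mpr (by positivity)
    rw [Real.exp_zero] at this; linarith
  have h1e : (0:ℝ) < 1 - Real.exp (-(2*π)) := by
    have : Real.exp (-(2*π)) < Real.exp 0 := Real.exp_lt_exp.mpr (by nlinarith)
    rw [Real.exp_zero] at this; linarith
  have hb4 : (1 - Real.exp (-(2*π))) * Real.exp (2*π*t) ≤ Real.exp (2*π*t) - 1 := by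
    have h5 : Real.exp (-(2*π)) * Real.exp (2*π*t) = Real.exp (2*π*t - 2*π) := by
      rw [← Real.exp_add]; ring_nf
    have h6 : (1:ℝ) ≤ Real.exp (2*π*t - 2*π) := by
      rw [← Real.exp_zero]
      exact Real.exp_le_exp.mpr (by nlinarith)
    nlinarith [Real.exp_pos (2*π*t)]
  have hquot : |1 - Real.exp (-(2*π*Mr*t))| / (Real.exp (2*π*t) - 1)
      ≤ 1 / ((1 - Real.exp (-(2*π))) * Real.exp (2*π*t)) := by
    exact div_le_div₀ zero_le_one hb3 (by positivity) hb4
  calc t^j * Real.exp (-(2*π*w*t)) * (|1 - Real.exp (-(2*π*Mr*t))| / (Real.exp (2*π*t) - 1))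
      ≤ ((K0:ℝ)^j * Real.exp (t - (K0:ℝ))) * 1 *
        (1 / ((1 - Real.exp (-(2*π))) * Real.exp (2*π*t))) := by
        refine mul_le_mul (mul_le_mul hb1 hb2 (Real.exp_nonneg _) (by positivity)) hquot
          (by positivity) (by positivity)
    _ = (K0:ℝ)^j * (Real.exp (-(K0:ℝ)) / (1 - Real.exp (-(2*π)))) * Real.exp (-(2*π - 1)*t) := by
        have hh : Real.exp (t - (K0:ℝ)) * (Real.exp (2*π*t))⁻¹
            = Real.exp (-(K0:ℝ)) * Real.exp (-(2*π - 1)*t) := by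
          rw [← Real.exp_neg, ← Real.exp_add, ← Real.exp_add]
          congr 1
          ring
        calc ((K0:ℝ)^j * Real.exp (t - (K0:ℝ))) * 1 *
            (1 / ((1 - Real.exp (-(2*π))) * Real.exp (2*π*t)))
            = (K0:ℝ)^j * (1/(1 - Real.exp (-(2*π)))) *
              (Real.exp (t - (K0:ℝ)) * (Real.exp (2*π*t))⁻¹) := by
              rw [mul_one, one_div, mul_inv]; ring
          _ = (K0:ℝ)^j * (Real.exp (-(K0:ℝ)) / (1 - Real.exp (-(2*π)))) *
              Real.exp (-(2*π - 1)*t) := by rw [hh]; ring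


end SumIC3Aux

open SumIC3Aux

/-- `∑_{m=q+1}^{M} I_{C₃}(K,j;a−m,b)` equals
`e^{−(j+1)πi/2} J(K,j;M−q,2bK−ω,b)` up to an error of at most `e^{−K}`. -/

theorem sum_IC3_approx_J (K : ℕ) (hK : 1 ≤ K) (j : ℕ) (hj : j ≤ K)
    (a b : ℝ) (ha : a ∈ Set.Ico (0 : ℝ) 1) (hb : 0 < b)
    (hpq : (⌈a⌉ : ℤ) < ⌊a + 2 * b * K⌋)
    (M : ℤ) (hM : ⌊a + 2 * b * K⌋ < M) :
    ‖(∑ m ∈ Finset.Icc (⌊a + 2 * b * K⌋ + 1) M, IC3 K j (a - (m : ℝ)) b) -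
        Complex.exp (-((j : ℂ) + 1) * (Real.pi : ℂ) * Complex.I / 2) *
          Jint K j (M - ⌊a + 2 * b * K⌋)
            (2 * b * K - Int.fract (a + 2 * b * K)) b‖ ≤ Real.exp (-(K : ℝ)) := by
  obtain ⟨ha0, ha1⟩ := ha
  have hK1 : (1:ℝ) ≤ (K:ℝ) := by exact_mod_cast hK
  have hKpos : (0:ℝ) < (K:ℝ) := by linarith
  set q : ℤ := ⌊a + 2 * b * K⌋ with hqdef
  have hfr : (2 * b * (K:ℝ) - Int.fract (a + 2 * b * (K:ℝ))) = (q:ℝ) - a := by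
    rw [← Int.self_sub_floor, ← hqdef]; ring
  rw [hfr]
  have hMq : q < M := hM
  have hqa : a + 1 ≤ (q:ℝ) := by
    have h1 : ((⌈a⌉ : ℤ) : ℝ) + 1 ≤ (q:ℝ) := by exact_mod_cast (by omega : (⌈a⌉:ℤ) + 1 ≤ q)
    have h2 : a ≤ ((⌈a⌉ : ℤ) : ℝ) := Int.le_ceil a
    linarith
  have hw : 0 < (q:ℝ) - a := by linarith
  have hcm : ∀ m ∈ Finset.Icc (q+1) M, a - (m:ℝ) < 0 := by
    intro m hm
    rw [Finset.mem_Icc] at hm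
    have : (q:ℝ) + 1 ≤ (m:ℝ) := by exact_mod_cast hm.1
    linarith
  have hint : ∀ m ∈ Finset.Icc (q+1) M, IntegrableOn (f1 j (a - (m:ℝ)) b) (Ioi 0) :=
    fun m hm => integrableOn_f1 j (hcm m hm) b
  have hpt : EqOn (fun t => ∑ m ∈ Finset.Icc (q+1) M, f1 j (a - (m:ℝ)) b t)
      (g1 j ((q:ℝ) - a) b (M - q)) (Ioi 0) :=
    fun t ht => sum_f1_eq_g1 j q M hMq a b ht
  have hgint : IntegrableOn (g1 j ((q:ℝ) - a) b (M - q)) (Ioi 0) :=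
    IntegrableOn.congr_fun (integrable_finset_sum _ hint) hpt measurableSet_Ioi
  have hsum : (∑ m ∈ Finset.Icc (q+1) M, IC3 K j (a - (m:ℝ)) b)
      = (-Complex.I)^(j+1) * ((K:ℂ)^j)⁻¹ *
        ∫ t in Ioi (0:ℝ), g1 j ((q:ℝ) - a) b (M - q) t := by
    calc (∑ m ∈ Finset.Icc (q+1) M, IC3 K j (a - (m:ℝ)) b)
        = ∑ m ∈ Finset.Icc (q+1) M, (-Complex.I)^(j+1) * ((K:ℂ)^j)⁻¹ *
            ∫ t in Ioi (0:ℝ), f1 j (a - (m:ℝ)) b t :=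
          Finset.sum_congr rfl (fun m _ => IC3_eq K j (a - (m:ℝ)) b)
      _ = (-Complex.I)^(j+1) * ((K:ℂ)^j)⁻¹ *
            ∑ m ∈ Finset.Icc (q+1) M, ∫ t in Ioi (0:ℝ), f1 j (a - (m:ℝ)) b t := by
          rw [Finset.mul_sum]
      _ = (-Complex.I)^(j+1) * ((K:ℂ)^j)⁻¹ *
            ∫ t in Ioi (0:ℝ), ∑ m ∈ Finset.Icc (q+1) M, f1 j (a - (m:ℝ)) b t := by
          rw [integral_finset_sum _ hint]
      _ = (-Complex.I)^(j+1) * ((K:ℂ)^j)⁻¹ *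
            ∫ t in Ioi (0:ℝ), g1 j ((q:ℝ) - a) b (M - q) t := by
          rw [setIntegral_congr_fun measurableSet_Ioi hpt]
  have hphase : Complex.exp (-((j:ℂ)+1) * (Real.pi:ℂ) * Complex.I / 2)
      = (-Complex.I)^(j+1) := by
    have h1 : Complex.exp (-((Real.pi:ℂ)/2) * Complex.I) = -Complex.I := by
      rw [Complex.exp_mul_I, Complex.cos_neg, Complex.sin_neg, Complex.cos_pi_div_two,
        Complex.sin_pi_div_two]
      ring
    have h2 : (-((j:ℂ)+1) * (Real.pi:ℂ) * Complex.I / 2)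
        = ((j+1 : ℕ):ℂ) * (-((Real.pi:ℂ)/2) * Complex.I) := by push_cast; ring
    rw [h2, Complex.exp_nat_mul, h1]
  have hJ : Complex.exp (-((j:ℂ)+1) * (Real.pi:ℂ) * Complex.I / 2) *
        Jint K j (M - q) ((q:ℝ) - a) b
      = (-Complex.I)^(j+1) * ((K:ℂ)^j)⁻¹ *
        ∫ t in Ioc (0:ℝ) (K:ℝ), g1 j ((q:ℝ) - a) b (M - q) t := by
    rw [hphase, Jint_eq]
    ring
  have hsplit : (∫ t in Ioi (0:ℝ), g1 j ((q:ℝ) - a) b (M - q) t)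
      = (∫ t in Ioc (0:ℝ) (K:ℝ), g1 j ((q:ℝ) - a) b (M - q) t)
        + ∫ t in Ioi (K:ℝ), g1 j ((q:ℝ) - a) b (M - q) t := by
    rw [← Ioc_union_Ioi_eq_Ioi hKpos.le,
      setIntegral_union (Ioc_disjoint_Ioi le_rfl) measurableSet_Ioi
        (hgint.mono_set Ioc_subset_Ioi_self) (hgint.mono_set (Ioi_subset_Ioi hKpos.le))]
  have hdiff : (∑ m ∈ Finset.Icc (q+1) M, IC3 K j (a - (m:ℝ)) b) -
      Complex.exp (-((j:ℂ)+1) * (Real.pi:ℂ) * Complex.I / 2) *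
        Jint K j (M - q) ((q:ℝ) - a) b
      = (-Complex.I)^(j+1) * ((K:ℂ)^j)⁻¹ *
        ∫ t in Ioi (K:ℝ), g1 j ((q:ℝ) - a) b (M - q) t := by
    rw [hsum, hJ, hsplit]
    ring
  rw [hdiff]
  -- now the norm bound
  have hM1 : (1:ℝ) ≤ ((M - q : ℤ):ℝ) := by exact_mod_cast (by omega : (1:ℤ) ≤ M - q)
  have h2π1 : (0:ℝ) < 2*π - 1 := by nlinarith [Real.pi_gt_three]
  have h1e : (0:ℝ) < 1 - Real.exp (-(2*π)) := by
    have hlt : Real.exp (-(2*π)) < Real.exp 0 := Real.exp_lt_exp.mpr (by nlinarith [Real.pi_pos])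
    rw [Real.exp_zero] at hlt; linarith
  have hIb : Integrable (fun t => (K:ℝ)^j * (Real.exp (-(K:ℝ))/(1 - Real.exp (-(2*π)))) *
      Real.exp (-(2*π-1)*t)) (volume.restrict (Ioi (K:ℝ))) :=
    (exp_neg_integrableOn_Ioi (K:ℝ) h2π1).const_mul _
  have hnorm_int : ‖∫ t in Ioi (K:ℝ), g1 j ((q:ℝ)-a) b (M-q) t‖
      ≤ (K:ℝ)^j * (Real.exp (-(K:ℝ))/(1 - Real.exp (-(2*π)))) *
        (Real.exp (-(2*π-1)*(K:ℝ))/(2*π-1)) := by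
    have h := norm_integral_le_of_norm_le hIb (by
      filter_upwards [ae_restrict_mem measurableSet_Ioi] with t ht
      have ht0 : (0:ℝ) < t := lt_trans hKpos ht
      rw [norm_g1 j _ b (M-q) ht0]
      exact norm_g1_le_aux hK hj hw hM1 ht)
    rwa [integral_const_mul, integral_exp_neg_mul_Ioi h2π1 (K:ℝ)] at h
  calc ‖(-Complex.I)^(j+1) * ((K:ℂ)^j)⁻¹ *
        ∫ t in Ioi (K:ℝ), g1 j ((q:ℝ) - a) b (M - q) t‖
      = ((K:ℝ)^j)⁻¹ * ‖∫ t in Ioi (K:ℝ), g1 j ((q:ℝ) - a) b (M - q) t‖ := by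
        rw [norm_mul, norm_mul, norm_pow, norm_neg, Complex.norm_I, one_pow, one_mul,
          norm_inv, norm_pow, Complex.norm_natCast]
    _ ≤ ((K:ℝ)^j)⁻¹ * ((K:ℝ)^j * (Real.exp (-(K:ℝ))/(1 - Real.exp (-(2*π)))) *
          (Real.exp (-(2*π-1)*(K:ℝ))/(2*π-1))) :=
        mul_le_mul_of_nonneg_left hnorm_int (by positivity)
    _ = Real.exp (-(K:ℝ)) *
          (Real.exp (-(2*π-1)*(K:ℝ)) / ((1 - Real.exp (-(2*π))) * (2*π-1))) := by
        field_simp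
    _ ≤ Real.exp (-(K:ℝ)) := by
        refine mul_le_of_le_one_right (Real.exp_nonneg _) ?_
        rw [div_le_one (by positivity)]
        have hc1 : Real.exp (-(2*π-1)*(K:ℝ)) ≤ Real.exp (-(5:ℝ)) :=
          Real.exp_le_exp.mpr (by nlinarith [Real.pi_gt_three])
        have hc2 : Real.exp (-(5:ℝ)) ≤ 1/6 := by
          rw [Real.exp_neg]
          have h6 : (6:ℝ) ≤ Real.exp 5 := by linarith [Real.add_one_le_exp (5:ℝ)]
          calc (Real.exp 5)⁻¹ ≤ 6⁻¹ := by
                apply inv_anti₀ (by norm_num) h6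
            _ ≤ 1/6 := by norm_num
        have hc3 : Real.exp (-(2*π)) ≤ 1/2 := by
          have hx : Real.exp (-(2*π)) ≤ Real.exp (-(1:ℝ)) :=
            Real.exp_le_exp.mpr (by nlinarith [Real.pi_gt_three])
          have h2 : (2:ℝ) ≤ Real.exp 1 := by linarith [Real.add_one_le_exp (1:ℝ)]
          have : Real.exp (-(1:ℝ)) ≤ 1/2 := by
            rw [Real.exp_neg]
            calc (Real.exp 1)⁻¹ ≤ 2⁻¹ := by apply inv_anti₀ (by norm_num) h2
              _ = 1/2 := by norm_num
          linarith
        nlinarith [Real.pi_gt_three]
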